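/- arXiv:2211.08744 — 5 statements merged into one kernel-verified Lean document; each statement's English description precedes it below -/
import Mathlib

section
/- Let u₁⁰, u₂¹, u₁¹ ∈ ℂ with u₁¹ ≠ 0, set M∞ := (1/u₁¹)·!![u₂¹, 1; 1, u₁⁰], and let ϑ̃, ϑ be Hermitian 2×2 complex matrices with det ϑ ≠ 0. Then the set { t ∈ ℝ : det(ϑ̃ + t·ϑ − M∞) = 0 } has at most two elements; equivalently, there are at most two real t for which the kernel of ϑ̃ + t·ϑ − M∞ is nontrivial. -/
open Matrix

/-- for Hermitian `ϑ̃, ϑ` with `det ϑ ≠ 0` and `u₁¹ ≠ 0`, the set of real `t`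
with `det(ϑ̃ + tϑ − M∞) = 0` has at most two elements; equivalently there are at most two
real `t` for which the kernel of `ϑ̃ + tϑ − M∞` is nontrivial. -/
theorem stmt6 (u10 u11 u21 : ℂ) (h11 : u11 ≠ 0)
    (ϑt ϑ : Matrix (Fin 2) (Fin 2) ℂ) (h1 : ϑt.IsHermitian) (h2 : ϑ.IsHermitian)
    (hdet : ϑ.det ≠ 0) :
    ∃ t₁ t₂ : ℝ,
      (∀ t : ℝ,
        (ϑt + (t : ℂ) • ϑ - (u11⁻¹ • !![u21, 1; 1, u10] : Matrix (Fin 2) (Fin 2) ℂ)).det = 0 →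
        t = t₁ ∨ t = t₂) ∧
      (∀ t : ℝ,
        (∃ z : Fin 2 → ℂ, z ≠ 0 ∧
          (ϑt + (t : ℂ) • ϑ -
            (u11⁻¹ • !![u21, 1; 1, u10] : Matrix (Fin 2) (Fin 2) ℂ)).mulVec z = 0) →
        t = t₁ ∨ t = t₂) := by
  set M : Matrix (Fin 2) (Fin 2) ℂ := u11⁻¹ • !![u21, 1; 1, u10] with hM
  set a : ℂ := ϑ.det with ha
  set b : ℂ := (ϑt - M) 0 0 * ϑ 1 1 + ϑ 0 0 * (ϑt - M) 1 1
      - (ϑt - M) 0 1 * ϑ 1 0 - ϑ 0 1 * (ϑt - M) 1 0 with hb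
  set c : ℂ := (ϑt - M).det with hc
  have key : ∀ z : ℂ, (ϑt + z • ϑ - M).det = a * (z * z) + b * z + c := by
    intro z
    simp only [ha, hb, hc, Matrix.det_fin_two, Matrix.sub_apply, Matrix.add_apply,
      Matrix.smul_apply, smul_eq_mul]
    ring
  obtain ⟨s, hs⟩ := IsAlgClosed.exists_pow_nat_eq (b ^ 2 - 4 * a * c) two_pos
  have hdisc : discrim a b c = s * s := by
    rw [discrim]; rw [← hs]; ring
  refine ⟨((-b + s) / (2 * a)).re, ((-b - s) / (2 * a)).re, ?_, ?_⟩
  · intro t ht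
    rw [key] at ht
    rcases (quadratic_eq_zero_iff hdet hdisc (t : ℂ)).mp ht with h | h
    · left; rw [← h, Complex.ofReal_re]
    · right; rw [← h, Complex.ofReal_re]
  · intro t ⟨z, hz, hzv⟩
    have hd : (ϑt + (t : ℂ) • ϑ - M).det = 0 := by
      rw [← Matrix.exists_mulVec_eq_zero_iff]
      exact ⟨z, hz, hzv⟩
    rw [key] at hd
    rcases (quadratic_eq_zero_iff hdet hdisc (t : ℂ)).mp hd with h | h
    · left; rw [← h, Complex.ofReal_re]
    · right; rw [← h, Complex.ofReal_re]
end

section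
/- Let β < b be real numbers, p, q, w : ℝ → ℝ, λ, λ₀ ∈ ℝ, and u, v : ℝ → ℝ. Assume that on [β, b): u and v are differentiable, the functions p·u′ and p·v′ are differentiable, and the Sturm–Liouville equations (p·u′)′(x) + q(x)·u(x) + λ·w(x)·u(x) = 0 and (p·v′)′(x) + q(x)·v(x) + λ₀·w(x)·v(x) = 0 hold for all x ∈ [β, b). Assume moreover that x ↦ u(x)·v(x)·w(x) is integrable on [β, b). Then the limit as x → b⁻ of the modified Wronskian [u,v](x) := p(x)·(u′(x)·v(x) − u(x)·v′(x)) exists and equals [u,v](β) + (λ₀ − λ)·∫_β^b u(x)·v(x)·w(x) dx. -/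
open Set Filter

/-- localized Green/Lagrange identity: if `u` solves the Sturm–Liouville
equation at `λ` and `v` at `λ₀` on `[β, b)`, and `u·v·w` is integrable on `[β, b)`, then the
modified Wronskian `[u,v](x) = p(x)(u′(x)v(x) − u(x)v′(x))` has a limit as `x → b⁻` equal to
`[u,v](β) + (λ₀ − λ)·∫_β^b u·v·w`. -/
theorem stmt10 (β b : ℝ) (hβb : β < b)
    (p q w u v u' v' pu' pv' : ℝ → ℝ) (lam lam0 : ℝ)
    (hu : ∀ x ∈ Ico β b, HasDerivAt u (u' x) x)
    (hv : ∀ x ∈ Ico β b, HasDerivAt v (v' x) x)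
    (hpu : ∀ x ∈ Ico β b, HasDerivAt (fun y => p y * u' y) (pu' x) x)
    (hpv : ∀ x ∈ Ico β b, HasDerivAt (fun y => p y * v' y) (pv' x) x)
    (hequ : ∀ x ∈ Ico β b, pu' x + q x * u x + lam * w x * u x = 0)
    (heqv : ∀ x ∈ Ico β b, pv' x + q x * v x + lam0 * w x * v x = 0)
    (hint : MeasureTheory.IntegrableOn (fun x => u x * v x * w x) (Ico β b)) :
    Tendsto (fun x => p x * (u' x * v x - u x * v' x)) (nhdsWithin b (Iio b))
      (nhds (p β * (u' β * v β - u β * v' β) +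
        (lam0 - lam) * ∫ x in Ico β b, u x * v x * w x)) := by
  set g : ℝ → ℝ := fun x => u x * v x * w x with hg
  set F : ℝ → ℝ := fun x => (p x * u' x) * v x - u x * (p x * v' x) with hF
  have hFeq : ∀ x, p x * (u' x * v x - u x * v' x) = F x := by
    intro x; simp only [hF]; ring
  -- derivative of F
  have hderiv : ∀ t ∈ Ico β b, HasDerivAt F ((lam0 - lam) * g t) t := by
    intro t ht
    have h1 := ((hpu t ht).mul (hv t ht)).sub ((hu t ht).mul (hpv t ht))
    convert h1 using 1
    · rfl
    · rfl
    · rfl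
    have e1 := hequ t ht
    have e2 := heqv t ht
    show (lam0 - lam) * (u t * v t * w t) = _
    linear_combination u t * e2 - v t * e1
  -- main identity
  have hmain : ∀ x ∈ Ico β b, F x = F β + (lam0 - lam) * ∫ t in Ioc β x, g t := by
    intro x hx
    have hsub : Icc β x ⊆ Ico β b := fun t htt => ⟨htt.1, lt_of_le_of_lt htt.2 hx.2⟩
    have hii : IntervalIntegrable (fun t => (lam0 - lam) * g t) MeasureTheory.volume β x := by
      apply MeasureTheory.IntegrableOn.intervalIntegrable
      rw [uIcc_of_le hx.1]
      exact (hint.mono_set hsub).const_mul (lam0 - lam)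
    have hftc := intervalIntegral.integral_eq_sub_of_hasDerivAt
      (f := F) (f' := fun t => (lam0 - lam) * g t)
      (fun t htt => hderiv t (hsub (by rwa [uIcc_of_le hx.1] at htt))) hii
    rw [intervalIntegral.integral_of_le hx.1] at hftc
    rw [MeasureTheory.integral_const_mul] at hftc
    linarith [hftc]
  -- limit of the integral
  have hlim : Tendsto (fun x => ∫ t in Ioc β x, g t) (nhdsWithin b (Iio b))
      (nhds (∫ t in Ico β b, g t)) := by
    have hrw : ∀ᶠ x in nhdsWithin b (Iio b),
        (∫ t in Ico β b, (Ioc β x).indicator g t) = ∫ t in Ioc β x, g t := by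
      filter_upwards [self_mem_nhdsWithin] with x hx
      have hss : Ioc β x ⊆ Ico β b := fun t htt =>
        mem_Ico.2 ⟨le_of_lt (mem_Ioc.1 htt).1, lt_of_le_of_lt (mem_Ioc.1 htt).2 hx⟩
      rw [MeasureTheory.setIntegral_indicator measurableSet_Ioc, inter_eq_right.2 hss]
    apply Tendsto.congr' hrw
    apply MeasureTheory.tendsto_integral_filter_of_dominated_convergence
      (bound := fun t => |g t|)
    · filter_upwards with x
      exact hint.aestronglyMeasurable.indicator measurableSet_Ioc
    · filter_upwards with x
      filter_upwards with t
      exact norm_indicator_le_norm_self g t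
    · simpa using hint.norm
    · have hnull : (MeasureTheory.volume.restrict (Ico β b)) {β} = 0 := by
        rw [MeasureTheory.Measure.restrict_apply (measurableSet_singleton β)]
        exact MeasureTheory.measure_mono_null (inter_subset_left) (MeasureTheory.measure_singleton β)
      have hae : ∀ᵐ t ∂(MeasureTheory.volume.restrict (Ico β b)), t ∈ Ioo β b := by
        have h1 : ∀ᵐ t ∂(MeasureTheory.volume.restrict (Ico β b)), t ∈ Ico β b :=
          MeasureTheory.ae_restrict_mem measurableSet_Ico
        have h2 : ∀ᵐ t ∂(MeasureTheory.volume.restrict (Ico β b)), t ≠ β := by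
          rw [MeasureTheory.ae_iff]
          simpa using hnull
        filter_upwards [h1, h2] with t ht1 ht2
        exact ⟨lt_of_le_of_ne ht1.1 (Ne.symm ht2), ht1.2⟩
      filter_upwards [hae] with t ht
      have : ∀ᶠ x in nhdsWithin b (Iio b), (Ioc β x).indicator g t = g t := by
        have hmem : Ioo t b ∈ nhdsWithin b (Iio b) := by
          apply mem_nhdsWithin.2
          exact ⟨Ioi t, isOpen_Ioi, ht.2, fun y hy => mem_Ioo.2 ⟨hy.1, hy.2⟩⟩
        filter_upwards [hmem] with x hx
        exact indicator_of_mem (mem_Ioc.2 ⟨ht.1, le_of_lt hx.1⟩) g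
      exact Tendsto.congr' (this.mono fun x hx => hx.symm) tendsto_const_nhds
  -- combine
  have hfinal : Tendsto (fun x => F β + (lam0 - lam) * ∫ t in Ioc β x, g t)
      (nhdsWithin b (Iio b)) (nhds (F β + (lam0 - lam) * ∫ t in Ico β b, g t)) :=
    tendsto_const_nhds.add (hlim.const_mul (lam0 - lam))
  have hev : ∀ᶠ x in nhdsWithin b (Iio b),
      F β + (lam0 - lam) * ∫ t in Ioc β x, g t = p x * (u' x * v x - u x * v' x) := by
    have hmem : Ioo β b ∈ nhdsWithin b (Iio b) := by
      apply mem_nhdsWithin.2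
      exact ⟨Ioi β, isOpen_Ioi, hβb, fun y hy => mem_Ioo.2 ⟨hy.1, hy.2⟩⟩
    filter_upwards [hmem] with x hx
    rw [hFeq x, hmain x ⟨le_of_lt hx.1, hx.2⟩]
  have := Tendsto.congr' hev hfinal
  rw [← hFeq β] at this
  convert this using 2
end

section
/- Let a < b be real numbers, p, q, w : ℝ → ℝ, λ, λ₀ ∈ ℝ with λ ≠ λ₀, and u, v : ℝ → ℝ. Assume that on (a, b): u and v are differentiable, p·u′ and p·v′ are differentiable, and (p·u′)′ + q·u + λ·w·u = 0 and (p·v′)′ + q·v + λ₀·w·v = 0 hold pointwise. Assume x ↦ u(x)·v(x)·w(x) is integrable on (a, b), and that the modified Wronskian [u,v](x) := p(x)·(u′(x)·v(x) − u(x)·v′(x)) tends to 0 as x → a⁺. Then [u,v](x) tends to 0 as x → b⁻ if and only if ∫_a^b u(x)·v(x)·w(x) dx = 0. -/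
open Set Filter MeasureTheory intervalIntegral

/-- if `u` solves the Sturm–Liouville equation at `λ` and `v` at `λ₀ ≠ λ` on
`(a, b)`, `u·v·w` is integrable on `(a, b)`, and the modified Wronskian
`[u,v](x) = p(x)(u′(x)v(x) − u(x)v′(x))` tends to `0` as `x → a⁺`, then `[u,v](x) → 0` as
`x → b⁻` iff `∫_a^b u·v·w = 0`. -/
theorem stmt11 (a b : ℝ) (hab : a < b)
    (p q w u v u' v' pu' pv' : ℝ → ℝ) (lam lam0 : ℝ) (hll : lam ≠ lam0)
    (hu : ∀ x ∈ Ioo a b, HasDerivAt u (u' x) x)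
    (hv : ∀ x ∈ Ioo a b, HasDerivAt v (v' x) x)
    (hpu : ∀ x ∈ Ioo a b, HasDerivAt (fun y => p y * u' y) (pu' x) x)
    (hpv : ∀ x ∈ Ioo a b, HasDerivAt (fun y => p y * v' y) (pv' x) x)
    (hequ : ∀ x ∈ Ioo a b, pu' x + q x * u x + lam * w x * u x = 0)
    (heqv : ∀ x ∈ Ioo a b, pv' x + q x * v x + lam0 * w x * v x = 0)
    (hint : MeasureTheory.IntegrableOn (fun x => u x * v x * w x) (Ioo a b))
    (ha : Tendsto (fun x => p x * (u' x * v x - u x * v' x)) (nhdsWithin a (Ioi a)) (nhds 0)) :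
    Tendsto (fun x => p x * (u' x * v x - u x * v' x)) (nhdsWithin b (Iio b)) (nhds 0) ↔
      ∫ x in Ioo a b, u x * v x * w x = 0 := by
  set W : ℝ → ℝ := fun x => p x * (u' x * v x - u x * v' x) with hWdef
  set g : ℝ → ℝ := fun x => (lam0 - lam) * (u x * v x * w x) with hgdef
  have hgint : IntegrableOn g (Ioo a b) := hint.const_mul _
  -- derivative of the Wronskian
  have hWd : ∀ t ∈ Ioo a b, HasDerivAt W (g t) t := by
    intro t ht
    have h1 : HasDerivAt (fun x => (p x * u' x) * v x - u x * (p x * v' x))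
        (pu' t * v t + (p t * u' t) * v' t - (u' t * (p t * v' t) + u t * pv' t)) t :=
      ((hpu t ht).mul (hv t ht)).sub ((hu t ht).mul (hpv t ht))
    have heq : (fun x => (p x * u' x) * v x - u x * (p x * v' x)) = W := by
      funext x; simp only [hWdef]; ring
    rw [heq] at h1
    convert h1 using 1
    have e1 := hequ t ht
    have e2 := heqv t ht
    simp only [hgdef]
    linear_combination (-(v t)) * e1 + (u t) * e2
  set F : ℝ → ℝ := fun x => ∫ t in a..x, g t with hFdef
  have hIcc : IntegrableOn g (Icc a b) := by
    rwa [integrableOn_Icc_iff_integrableOn_Ioo]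
  have hFcont : ContinuousOn F (Icc a b) := by
    have := intervalIntegral.continuousOn_primitive_interval (f := g) (μ := volume) (a := a) (b := b)
      (by rwa [uIcc_of_le hab.le])
    rwa [uIcc_of_le hab.le] at this
  have hIoc : ∀ x ∈ Ioo a b, IntervalIntegrable g volume a x := by
    intro x hx
    rw [intervalIntegrable_iff_integrableOn_Ioc_of_le hx.1.le]
    exact hgint.mono_set (fun t ht => ⟨ht.1, ht.2.trans_lt hx.2⟩)
  -- W = F on Ioo a b
  have hWF : ∀ x ∈ Ioo a b, W x = F x := by
    intro x hx
    have key : ∀ y ∈ Ioo a x, W x - W y = F x - F y := by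
      intro y hy
      have hy' : y ∈ Ioo a b := ⟨hy.1, hy.2.trans hx.2⟩
      have hsub : Icc y x ⊆ Ioo a b := fun t ht => ⟨hy.1.trans_le ht.1, ht.2.trans_lt hx.2⟩
      have hii : IntervalIntegrable g volume y x := by
        rw [intervalIntegrable_iff_integrableOn_Ioc_of_le hy.2.le]
        exact hgint.mono_set (fun t ht => hsub ⟨ht.1.le, ht.2⟩)
      have hftc : ∫ t in y..x, g t = W x - W y :=
        intervalIntegral.integral_eq_sub_of_hasDerivAt
          (fun t ht => hWd t (hsub (by rwa [uIcc_of_le hy.2.le] at ht))) hii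
      have hadd : (∫ t in a..y, g t) + ∫ t in y..x, g t = ∫ t in a..x, g t :=
        intervalIntegral.integral_add_adjacent_intervals (hIoc y hy') hii
      simp only [hFdef]
      rw [← hftc, ← hadd]; ring
    have h1 : Tendsto (fun y => W x - W y) (nhdsWithin a (Ioi a)) (nhds (W x - 0)) :=
      tendsto_const_nhds.sub ha
    have h2 : Tendsto F (nhdsWithin a (Ioi a)) (nhds (F a)) := by
      refine (hFcont a (left_mem_Icc.2 hab.le)).mono_left (nhdsWithin_le_of_mem ?_)
      exact mem_of_superset (Ioc_mem_nhdsGT_of_mem ⟨le_refl a, hab⟩) Ioc_subset_Icc_self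
    have hFa : F a = 0 := intervalIntegral.integral_same
    have h2' : Tendsto (fun y => F x - F y) (nhdsWithin a (Ioi a)) (nhds (F x - 0)) := by
      rw [← hFa]; exact tendsto_const_nhds.sub h2
    have heve : (fun y => W x - W y) =ᶠ[nhdsWithin a (Ioi a)] (fun y => F x - F y) := by
      filter_upwards [Ioo_mem_nhdsGT_of_mem ⟨le_refl a, hx.1⟩] with y hy using key y hy
    have := tendsto_nhds_unique (h1.congr' heve) h2'
    linarith
  -- limit of F at b
  have hFb : Tendsto F (nhdsWithin b (Iio b)) (nhds (F b)) := by
    refine (hFcont b (right_mem_Icc.2 hab.le)).mono_left (nhdsWithin_le_of_mem ?_)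
    exact mem_of_superset (Ico_mem_nhdsLT_of_mem ⟨hab, le_refl b⟩) Ico_subset_Icc_self
  have hFbval : F b = (lam0 - lam) * ∫ x in Ioo a b, u x * v x * w x := by
    simp only [hFdef]
    rw [intervalIntegral.integral_of_le hab.le, MeasureTheory.integral_Ioc_eq_integral_Ioo]
    simp only [hgdef]
    rw [MeasureTheory.integral_const_mul]
  have hWb : Tendsto W (nhdsWithin b (Iio b))
      (nhds ((lam0 - lam) * ∫ x in Ioo a b, u x * v x * w x)) := by
    rw [← hFbval]
    refine hFb.congr' ?_
    filter_upwards [Ioo_mem_nhdsLT_of_mem ⟨hab, le_refl b⟩] with y hy using (hWF y hy).symm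
  have hne : lam0 - lam ≠ 0 := sub_ne_zero_of_ne hll.symm
  constructor
  · intro h
    have := tendsto_nhds_unique h hWb
    rcases mul_eq_zero.1 this.symm with h' | h'
    · exact absurd h' hne
    · exact h'
  · intro h
    rw [h, mul_zero] at hWb
    exact hWb
end

section
/- Let u₁⁰, u₁¹, u₂⁰, u₂¹ be real numbers with u₁⁰·u₂¹ − u₁¹·u₂⁰ = 1 and u₁¹ ≠ 0, and set M∞ := (1/u₁¹)·!![u₂¹, 1; 1, u₁⁰]. Let ϑ̃, ϑ be real symmetric 2×2 matrices with det(ϑ) = 0, and suppose c := ϑ̃₁₁·ϑ₂₂·u₁¹ + ϑ₁₁·ϑ̃₂₂·u₁¹ − ϑ₁₁·u₁⁰ − ϑ₂₂·u₂¹ − ϑ̃₁₂·ϑ₁₂·u₁¹ − ϑ̃₂₁·ϑ₂₁·u₁¹ + ϑ₁₂ + ϑ₂₁ ≠ 0. Then there exists exactly one t ∈ ℝ with det(ϑ̃ + t·ϑ − M∞) = 0. -/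
open Matrix

/-- if `det ϑ = 0` but the linear coefficient `c ≠ 0`, there is exactly one
real `t` with `det(ϑ̃ + tϑ − M∞) = 0`. -/
theorem stmt14 (u10 u11 u20 u21 : ℝ)
    (hW : u10 * u21 - u11 * u20 = 1) (h11 : u11 ≠ 0)
    (ϑt ϑ : Matrix (Fin 2) (Fin 2) ℝ) (h1 : ϑt.IsSymm) (h2 : ϑ.IsSymm)
    (hdet : ϑ.det = 0)
    (hc : ϑt 0 0 * ϑ 1 1 * u11 + ϑ 0 0 * ϑt 1 1 * u11 - ϑ 0 0 * u10 - ϑ 1 1 * u21 -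
        ϑt 0 1 * ϑ 0 1 * u11 - ϑt 1 0 * ϑ 1 0 * u11 + ϑ 0 1 + ϑ 1 0 ≠ 0) :
    ∃! t : ℝ,
      (ϑt + t • ϑ - (u11⁻¹ • !![u21, 1; 1, u10]) : Matrix (Fin 2) (Fin 2) ℝ).det = 0 := by
  have hs : ϑ 1 0 = ϑ 0 1 := by
    have := congrFun (congrFun h2 1) 0
    simpa [Matrix.transpose_apply] using this.symm
  have hdet' : ϑ 0 0 * ϑ 1 1 - ϑ 0 1 * ϑ 1 0 = 0 := by
    rw [← Matrix.det_fin_two]; exact hdet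
  set C : ℝ := ϑt 0 0 * ϑ 1 1 * u11 + ϑ 0 0 * ϑt 1 1 * u11 - ϑ 0 0 * u10 - ϑ 1 1 * u21 -
      ϑt 0 1 * ϑ 0 1 * u11 - ϑt 1 0 * ϑ 1 0 * u11 + ϑ 0 1 + ϑ 1 0 with hC
  set D : ℝ := (ϑt 0 0 * u11 - u21) * (ϑt 1 1 * u11 - u10) -
      (ϑt 0 1 * u11 - 1) * (ϑt 1 0 * u11 - 1) with hD
  have key : ∀ t : ℝ,
      (ϑt + t • ϑ - (u11⁻¹ • !![u21, 1; 1, u10]) : Matrix (Fin 2) (Fin 2) ℝ).det * (u11 * u11)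
        = D + t * (C * u11) := by
    intro t
    simp only [Matrix.det_fin_two, Matrix.sub_apply, Matrix.add_apply, Matrix.smul_apply,
      Matrix.cons_val', Matrix.cons_val_zero, Matrix.cons_val_one, Matrix.head_cons,
      Matrix.empty_val', Matrix.cons_val_fin_one, Matrix.head_fin_const, smul_eq_mul, hC, hD, Matrix.of_apply]
    field_simp
    linear_combination (u11 * u11 * t * t) * hdet' + (u11 * u11 * t * (ϑt 1 0 - ϑt 0 1)) * hs
  have key2 : ∀ t : ℝ,
      (ϑt + t • ϑ - (u11⁻¹ • !![u21, 1; 1, u10]) : Matrix (Fin 2) (Fin 2) ℝ).det = 0 ↔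
      D + t * (C * u11) = 0 := by
    intro t
    rw [← key t]
    constructor
    · intro h; rw [h]; ring
    · intro h
      have := mul_ne_zero h11 h11
      exact (mul_eq_zero.mp h).resolve_right this
  have hCu : C * u11 ≠ 0 := mul_ne_zero hc h11
  refine ⟨-D / (C * u11), (key2 _).mpr (by field_simp; ring), ?_⟩
  · intro t ht
    rw [key2] at ht
    field_simp
    linarith [ht]
end

section
/- Let u₁⁰, u₁¹, u₂⁰, u₂¹ be real numbers with u₁⁰·u₂¹ − u₁¹·u₂⁰ = 1 and u₁¹ ≠ 0, and set M∞ := (1/u₁¹)·!![u₂¹, 1; 1, u₁⁰]. Let ϑ̃, ϑ be real symmetric 2×2 matrices with det(ϑ) = 0 and with c = 0, where c := ϑ̃₁₁·ϑ₂₂·u₁¹ + ϑ₁₁·ϑ̃₂₂·u₁¹ − ϑ₁₁·u₁⁰ − ϑ₂₂·u₂¹ − ϑ̃₁₂·ϑ₁₂·u₁¹ − ϑ̃₂₁·ϑ₂₁·u₁¹ + ϑ₁₂ + ϑ₂₁. Set d := det(ϑ̃)·u₁¹ − ϑ̃₁₁·u₁⁰ − ϑ̃₂₂·u₂¹ + ϑ̃₁₂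 + ϑ̃₂₁ + u₂⁰. Then det(ϑ̃ + t·ϑ − M∞) = d/u₁¹ for every t ∈ ℝ; consequently, if d = 0 then det(ϑ̃ + t·ϑ − M∞) = 0 for all t ∈ ℝ, and if d ≠ 0 then det(ϑ̃ + t·ϑ − M∞) ≠ 0 for all t ∈ ℝ. -/
open Matrix

/-- if `det ϑ = 0` and `c = 0`, then `det(ϑ̃ + tϑ − M∞) = d/u₁¹` for all real
`t`; hence if `d = 0` the determinant vanishes for all `t`, and if `d ≠ 0` for no `t`. -/
theorem stmt15 (u10 u11 u20 u21 : ℝ)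
    (hW : u10 * u21 - u11 * u20 = 1) (h11 : u11 ≠ 0)
    (ϑt ϑ : Matrix (Fin 2) (Fin 2) ℝ) (h1 : ϑt.IsSymm) (h2 : ϑ.IsSymm)
    (hdet : ϑ.det = 0)
    (hc : ϑt 0 0 * ϑ 1 1 * u11 + ϑ 0 0 * ϑt 1 1 * u11 - ϑ 0 0 * u10 - ϑ 1 1 * u21 -
        ϑt 0 1 * ϑ 0 1 * u11 - ϑt 1 0 * ϑ 1 0 * u11 + ϑ 0 1 + ϑ 1 0 = 0) :
    (∀ t : ℝ,
      (ϑt + t • ϑ - (u11⁻¹ • !![u21, 1; 1, u10]) : Matrix (Fin 2) (Fin 2) ℝ).det =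
        (ϑt.det * u11 - ϑt 0 0 * u10 - ϑt 1 1 * u21 + ϑt 0 1 + ϑt 1 0 + u20) / u11) ∧
    ((ϑt.det * u11 - ϑt 0 0 * u10 - ϑt 1 1 * u21 + ϑt 0 1 + ϑt 1 0 + u20 = 0 →
        ∀ t : ℝ,
          (ϑt + t • ϑ - (u11⁻¹ • !![u21, 1; 1, u10]) : Matrix (Fin 2) (Fin 2) ℝ).det = 0) ∧
      (ϑt.det * u11 - ϑt 0 0 * u10 - ϑt 1 1 * u21 + ϑt 0 1 + ϑt 1 0 + u20 ≠ 0 →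
        ∀ t : ℝ,
          (ϑt + t • ϑ - (u11⁻¹ • !![u21, 1; 1, u10]) : Matrix (Fin 2) (Fin 2) ℝ).det ≠ 0)) := by
  have key : ∀ t : ℝ,
      (ϑt + t • ϑ - (u11⁻¹ • !![u21, 1; 1, u10]) : Matrix (Fin 2) (Fin 2) ℝ).det =
        (ϑt.det * u11 - ϑt 0 0 * u10 - ϑt 1 1 * u21 + ϑt 0 1 + ϑt 1 0 + u20) / u11 := by
    intro t
    rw [Matrix.det_fin_two, Matrix.det_fin_two]
    simp only [Matrix.sub_apply, Matrix.add_apply, Matrix.smul_apply, Matrix.cons_val',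
      Matrix.cons_val_zero, Matrix.cons_val_one, Matrix.head_cons, Matrix.empty_val',
      Matrix.cons_val_fin_one, Matrix.head_fin_const, smul_eq_mul, Matrix.of_apply]
    rw [Matrix.det_fin_two] at hdet
    have e2 : ϑ 1 0 = ϑ 0 1 := h2.apply 0 1
    field_simp
    linear_combination (t^2*u11^2)*hdet + (t*u11)*hc + hW +
      ((ϑt 1 0 - ϑt 0 1)*t*u11^2)*e2
  refine ⟨key, fun hd t => by rw [key t, hd]; simp, fun hd t => by rw [key t]; exact div_ne_zero hd h11⟩
end
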